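/- arXiv:1211.2507 — 2 statements merged into one kernel-verified Lean document; each statement's English description precedes it below -/
import Mathlib

section
/- Let y = (y_1,...,y_n) be uniformly distributed on the unit sphere S^{n-1} in R^n, with n ≥ 4. For indices i, j, k, l mutually distinct, |E[(y_i^2 - 1/n)(y_j^2 - 1/n)(y_k^2 - 1/n)(y_l^2 - 1/n)]| ≤ C n^{-6} for an absolute constant C. -/
open MeasureTheory ProbabilityTheory

/-- The standard Gaussian measure on `Fin n → ℝ`. -/
noncomputable def stdGaussian (n : ℕ) : Measure (Fin n → ℝ) :=
  Measure.pi fun _ => gaussianReal 0 1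

/-- The uniform (rotation-invariant) probability measure on the unit sphere `S^{n-1} ⊆ ℝ^n`,
realized as the law of `g / ‖g‖` for a standard Gaussian vector `g`. -/
noncomputable def sphereUniform (n : ℕ) : Measure (Fin n → ℝ) :=
  (stdGaussian n).map (fun g i => g i / Real.sqrt (∑ j, g j ^ 2))

namespace SphereAux

open Real Finset Set
open scoped ENNReal NNReal

instance (n : ℕ) : IsProbabilityMeasure (stdGaussian n) := by
  unfold _root_.stdGaussian; infer_instance

noncomputable def Xc (n : ℕ) (i : Fin n) (g : Fin n → ℝ) : ℝ :=
  (g i / Real.sqrt (∑ j, g j ^ 2)) ^ 2 - 1 / n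

variable {n : ℕ}

lemma Xc_eq (i : Fin n) (g : Fin n → ℝ) :
    Xc n i g = g i ^ 2 / (∑ j, g j ^ 2) - 1 / n := by
  unfold Xc
  rw [div_pow, sq_sqrt (by positivity)]

lemma Xc_meas (i : Fin n) : Measurable (Xc n i) := by
  unfold Xc; fun_prop

lemma ratio_nonneg (i : Fin n) (g : Fin n → ℝ) :
    0 ≤ g i ^ 2 / (∑ j, g j ^ 2) := by positivity

lemma ratio_le_one (i : Fin n) (g : Fin n → ℝ) :
    g i ^ 2 / (∑ j, g j ^ 2) ≤ 1 := by
  have h1 : g i ^ 2 ≤ ∑ j, g j ^ 2 :=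
    Finset.single_le_sum (f := fun j => g j ^ 2) (fun _ _ => sq_nonneg _) (mem_univ i)
  exact div_le_one_of_le₀ h1 (by positivity)

lemma abs_Xc_le_one (hn : 1 ≤ n) (i : Fin n) (g : Fin n → ℝ) : |Xc n i g| ≤ 1 := by
  rw [Xc_eq]
  have h0 := ratio_nonneg i g
  have h1 := ratio_le_one i g
  have hn' : (1:ℝ) ≤ n := by exact_mod_cast hn
  have hnpos : (0:ℝ) < n := by linarith
  have h2 : 0 < 1 / (n:ℝ) := by positivity
  have h3 : 1 / (n:ℝ) ≤ 1 := by rw [div_le_one hnpos]; linarith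
  rw [abs_le]; constructor <;> linarith

lemma integrable_of_bounded {F : (Fin n → ℝ) → ℝ} (hF : Measurable F) (c : ℝ)
    (h : ∀ g, |F g| ≤ c) : Integrable F (stdGaussian n) :=
  (integrable_const c).mono' hF.aestronglyMeasurable (ae_of_all _ (by simpa using h))

lemma perm_equiv_eq (σ : Equiv.Perm (Fin n)) (g : Fin n → ℝ) :
    (MeasurableEquiv.piCongrLeft (fun _ => ℝ) σ).symm g = fun t => g (σ t) := by
  funext t
  exact Equiv.piCongrLeft_symm_apply (fun _ => ℝ) σ g t

lemma measurePreserving_perm (σ : Equiv.Perm (Fin n)) :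
    MeasurePreserving (fun (g : Fin n → ℝ) (t : Fin n) => g (σ t))
      (stdGaussian n) (stdGaussian n) := by
  have h := (measurePreserving_piCongrLeft (fun _ : Fin n => gaussianReal 0 1) σ).symm
    (MeasurableEquiv.piCongrLeft (fun _ => ℝ) σ)
  have he : (fun (g : Fin n → ℝ) (t : Fin n) => g (σ t))
      = ⇑(MeasurableEquiv.piCongrLeft (fun _ => ℝ) σ).symm := by
    funext g; rw [perm_equiv_eq]
  rw [he]
  exact h

lemma integral_comp_perm (σ : Equiv.Perm (Fin n)) (F : (Fin n → ℝ) → ℝ) :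
    ∫ g, F (fun t => g (σ t)) ∂stdGaussian n = ∫ g, F g ∂stdGaussian n := by
  have he : (fun (g : Fin n → ℝ) (t : Fin n) => g (σ t))
      = ⇑(MeasurableEquiv.piCongrLeft (fun _ => ℝ) σ).symm := by
    funext g; rw [perm_equiv_eq]
  exact (measurePreserving_perm (n := n) σ).integral_comp
    (he ▸ (MeasurableEquiv.piCongrLeft (fun _ : Fin n => ℝ) σ).symm.measurableEmbedding) F

lemma gauss_zero : (gaussianReal 0 1 : Measure ℝ) {0} = 0 := by
  rw [gaussianReal_apply 0 one_ne_zero]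
  exact setLIntegral_measure_zero _ _ Real.volume_singleton

lemma ae_pos (s : Finset (Fin n)) (hs : s.Nonempty) :
    ∀ᵐ g ∂stdGaussian n, 0 < ∑ t ∈ s, g t ^ 2 := by
  obtain ⟨t0, ht0⟩ := hs
  rw [ae_iff]
  refine measure_mono_null (t := {g : Fin n → ℝ | g t0 = 0}) ?_ ?_
  · intro g hg
    simp only [Set.mem_setOf_eq, not_lt] at hg ⊢
    have hnn : 0 ≤ ∑ t ∈ s, g t ^ 2 := Finset.sum_nonneg fun _ _ => sq_nonneg _
    have hz : ∑ t ∈ s, g t ^ 2 = 0 := le_antisymm hg hnn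
    have := (Finset.sum_eq_zero_iff_of_nonneg fun _ _ => sq_nonneg _).mp hz t0 ht0
    exact pow_eq_zero_iff (by norm_num) |>.mp this
  · have hset : {g : Fin n → ℝ | g t0 = 0}
        = Set.pi Set.univ (fun t => if t = t0 then ({0} : Set ℝ) else Set.univ) := by
      ext g
      simp only [Set.mem_setOf_eq, Set.mem_pi, Set.mem_univ, forall_true_left]
      constructor
      · intro h t
        by_cases ht : t = t0 <;> simp [ht, h]
      · intro h
        have := h t0
        simpa using this
    rw [hset, _root_.stdGaussian, Measure.pi_pi]
    refine Finset.prod_eq_zero (mem_univ t0) ?_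
    simp [gauss_zero]

lemma sum_ratio (g : Fin n → ℝ) (hg : 0 < ∑ j, g j ^ 2) :
    ∑ i, g i ^ 2 / (∑ j, g j ^ 2) = 1 := by
  rw [← Finset.sum_div, div_self hg.ne']


noncomputable def P (n : ℕ) (a : Fin n → ℕ) (g : Fin n → ℝ) : ℝ := ∏ t, Xc n t g ^ a t

noncomputable def EI (n : ℕ) (a : Fin n → ℕ) : ℝ := ∫ g, P n a g ∂stdGaussian n

lemma P_meas (a : Fin n → ℕ) : Measurable (P n a) := by
  unfold P; exact Finset.measurable_prod _ fun t _ => (Xc_meas t).pow_const _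

lemma abs_P_le_one (hn : 1 ≤ n) (a : Fin n → ℕ) (g : Fin n → ℝ) : |P n a g| ≤ 1 := by
  unfold P; rw [Finset.abs_prod]
  refine Finset.prod_le_one (fun t _ => abs_nonneg _) (fun t _ => ?_)
  rw [abs_pow]; exact pow_le_one₀ (abs_nonneg _) (abs_Xc_le_one hn t g)

lemma integrable_P (hn : 1 ≤ n) (a : Fin n → ℕ) : Integrable (P n a) (stdGaussian n) :=
  integrable_of_bounded (P_meas a) 1 (abs_P_le_one hn a)

lemma P_zero (g : Fin n → ℝ) : P n 0 g = 1 := by unfold P; simp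

lemma P_add_single (a : Fin n → ℕ) (m : Fin n) (g : Fin n → ℝ) :
    P n (a + Pi.single m 1) g = Xc n m g * P n a g := by
  unfold P
  have h : ∀ t, Xc n t g ^ ((a + Pi.single m 1 : Fin n → ℕ) t)
      = Xc n t g ^ a t * Xc n t g ^ (Pi.single m 1 : Fin n → ℕ) t := by
    intro t; rw [Pi.add_apply, pow_add]
  simp_rw [h]
  rw [Finset.prod_mul_distrib]
  have h2 : ∏ t, Xc n t g ^ (Pi.single m 1 : Fin n → ℕ) t = Xc n m g := by
    rw [Finset.prod_eq_single m (fun t _ ht => by simp [Pi.single_eq_of_ne ht]) (by simp)]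
    simp
  rw [h2]; ring

lemma Xc_comp_perm (σ : Equiv.Perm (Fin n)) (i : Fin n) (g : Fin n → ℝ) :
    Xc n i (fun t => g (σ t)) = Xc n (σ i) g := by
  unfold Xc
  have hs : (∑ j, g (σ j) ^ 2) = ∑ j, g j ^ 2 := Equiv.sum_comp σ (fun j => g j ^ 2)
  simp only []
  rw [hs]

lemma P_comp_perm (σ : Equiv.Perm (Fin n)) (a : Fin n → ℕ) (g : Fin n → ℝ) :
    P n a (fun t => g (σ t)) = P n (a ∘ σ.symm) g := by
  unfold P
  simp_rw [Xc_comp_perm σ _ g]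
  have := Equiv.prod_comp σ (fun s => Xc n s g ^ a (σ.symm s))
  simp only [Equiv.symm_apply_apply] at this
  rw [this]
  rfl

lemma EI_perm (σ : Equiv.Perm (Fin n)) (a : Fin n → ℕ) : EI n (a ∘ σ) = EI n a := by
  have key : ∀ b : Fin n → ℕ, EI n (b ∘ σ.symm) = EI n b := by
    intro b
    unfold EI
    rw [← integral_comp_perm σ (P n b)]
    congr 1
    funext g
    exact (P_comp_perm σ b g).symm
  have := key (a ∘ σ)
  have h2 : (a ∘ σ) ∘ ⇑σ.symm = a := by
    funext t; simp
  rw [h2] at this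
  exact this.symm

lemma single_comp_perm (σ : Equiv.Perm (Fin n)) (r : Fin n) (c : ℕ) :
    (Pi.single r c : Fin n → ℕ) ∘ σ = Pi.single (σ.symm r) c := by
  funext t
  simp only [Function.comp_apply, Pi.single_apply]
  congr 1
  simp [Equiv.eq_symm_apply]

lemma EI_relation (hn : 1 ≤ n) (a : Fin n → ℕ) :
    ∑ m, EI n (a + Pi.single m 1) = 0 := by
  unfold EI
  rw [← integral_finset_sum _ (fun m _ => integrable_P hn _)]
  have hae : (fun g => ∑ m, P n (a + Pi.single m 1) g) =ᵐ[stdGaussian n] 0 := by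
    have hne : (univ : Finset (Fin n)).Nonempty :=
      ⟨⟨0, lt_of_lt_of_le zero_lt_one hn⟩, mem_univ _⟩
    filter_upwards [ae_pos univ hne] with g hg
    simp_rw [P_add_single]
    rw [← Finset.sum_mul]
    have hsum : ∑ m, Xc n m g = 0 := by
      simp_rw [Xc_eq]
      rw [Finset.sum_sub_distrib, sum_ratio g hg]
      simp only [Finset.sum_const, card_univ, Fintype.card_fin, nsmul_eq_mul]
      have hnpos : (0:ℝ) < n := by exact_mod_cast lt_of_lt_of_le zero_lt_one hn
      field_simp
      norm_num
    simp [hsum]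
  exact integral_eq_zero_of_ae hae



lemma gauss_withDensity : (gaussianReal 0 1 : Measure ℝ)
    = volume.withDensity (fun x => ((gaussianPDFReal 0 1 x).toNNReal : ℝ≥0∞)) := by
  rw [gaussianReal_of_var_ne_zero 0 one_ne_zero]
  rfl

lemma integral_gauss_eq (g : ℝ → ℝ) :
    ∫ x, g x ∂(gaussianReal 0 1) = ∫ x, gaussianPDFReal 0 1 x * g x := by
  rw [gauss_withDensity, integral_withDensity_eq_integral_smul
    ((measurable_gaussianPDFReal 0 1).real_toNNReal : Measurable fun x => (gaussianPDFReal 0 1 x).toNNReal) g]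
  congr 1; funext x
  rw [NNReal.smul_def, smul_eq_mul, Real.coe_toNNReal _ (gaussianPDFReal_nonneg 0 1 x)]

lemma pdf01 (x : ℝ) :
    gaussianPDFReal 0 1 x = (Real.sqrt (2*π))⁻¹ * Real.exp (-(x^2/2)) := by
  unfold gaussianPDFReal
  norm_num
  exact Or.inl (by ring)

lemma integrable_gauss_of_bounded {g : ℝ → ℝ} (hg : Measurable g) (c : ℝ)
    (h : ∀ x, |g x| ≤ c) : Integrable g (gaussianReal 0 1) :=
  (integrable_const c).mono' hg.aestronglyMeasurable (ae_of_all _ (by simpa using h))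

lemma integrable_exp_gauss (u : ℝ) (hu : 0 ≤ u) :
    Integrable (fun x => Real.exp (-(u * x^2))) (gaussianReal 0 1) := by
  refine integrable_gauss_of_bounded (by fun_prop) 1 (fun x => ?_)
  rw [abs_of_pos (exp_pos _), exp_le_one_iff]
  have : 0 ≤ u * x^2 := by positivity
  linarith

lemma integral_exp_gauss (u : ℝ) (hu : 0 ≤ u) :
    ∫ x, Real.exp (-(u * x^2)) ∂(gaussianReal 0 1)
      = (Real.sqrt (2*π))⁻¹ * Real.sqrt (π / (u + 1/2)) := by
  rw [integral_gauss_eq]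
  have h1 : ∀ x : ℝ, gaussianPDFReal 0 1 x * Real.exp (-(u * x^2))
      = (Real.sqrt (2*π))⁻¹ * Real.exp (-(u + 1/2) * x^2) := by
    intro x
    rw [pdf01, mul_assoc, ← Real.exp_add]
    congr 2
    ring
  simp_rw [h1]
  rw [integral_const_mul, integral_gaussian]

lemma exp_gauss_sq (u : ℝ) (hu : 0 ≤ u) :
    (∫ x, Real.exp (-(u * x^2)) ∂(gaussianReal 0 1)) ^ 2 = 1 / (1 + 2*u) := by
  rw [integral_exp_gauss u hu, mul_pow]
  have hpos : (0:ℝ) < 2 * π := by positivity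
  have hpos2 : (0:ℝ) < u + 1/2 := by linarith
  have h2 : (0:ℝ) ≤ π / (u + 1/2) := by positivity
  rw [inv_pow, Real.sq_sqrt hpos.le, Real.sq_sqrt h2]
  have hpi := Real.pi_ne_zero
  field_simp
  ring

lemma exp_gauss_nonneg (u : ℝ) :
    0 ≤ ∫ x, Real.exp (-(u * x^2)) ∂(gaussianReal 0 1) :=
  integral_nonneg fun x => (exp_pos _).le

lemma exp_gauss_le_one (u : ℝ) (hu : 0 ≤ u) :
    (∫ x, Real.exp (-(u * x^2)) ∂(gaussianReal 0 1)) ≤ 1 := by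
  have h1 := exp_gauss_sq u hu
  have h2 := exp_gauss_nonneg u
  have h3 : 1/(1+2*u) ≤ 1 := by
    rw [div_le_one (by linarith)]; linarith
  nlinarith



lemma rpow8 : (fun x : ℝ => x ^ (8:ℝ)) = fun x : ℝ => x ^ (8:ℕ) := by
  funext x
  rw [show (8:ℝ) = ((8:ℕ):ℝ) by norm_num, Real.rpow_natCast]

lemma integrable_pow8_exp : Integrable (fun x : ℝ => x ^ 8 * Real.exp (-(x^2/2))) := by
  have h := integrable_rpow_mul_exp_neg_mul_sq (b := 2⁻¹) (by norm_num) (s := 8) (by norm_num)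
  rw [show ((8:ℝ) : ℝ) = (8:ℝ) from rfl] at h
  have h2 : (fun x : ℝ => x ^ (8:ℝ) * Real.exp (-2⁻¹ * x ^ 2))
      = fun x : ℝ => x ^ 8 * Real.exp (-(x^2/2)) := by
    funext x
    rw [congrFun rpow8 x]
    congr 1
    ring_nf
  rwa [h2] at h

lemma integrable_pow8_gauss : Integrable (fun x : ℝ => x ^ 8) (gaussianReal 0 1) := by
  rw [gaussianReal_of_var_ne_zero 0 one_ne_zero]
  have hmeas : Measurable (gaussianPDF 0 1) := measurable_gaussianPDF 0 1
  rw [integrable_withDensity_iff hmeas (ae_of_all _ fun x => ENNReal.ofReal_lt_top)]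
  have h2 : (fun x : ℝ => x ^ 8 * (gaussianPDF 0 1 x).toReal)
      = fun x : ℝ => (Real.sqrt (2*π))⁻¹ * (x ^ 8 * Real.exp (-(x^2/2))) := by
    funext x
    rw [gaussianPDF, ENNReal.toReal_ofReal (gaussianPDFReal_nonneg 0 1 x), pdf01]
    ring
  rw [h2]
  exact integrable_pow8_exp.const_mul _

lemma pow8_exp_bound (x : ℝ) : x ^ 8 * Real.exp (-(x^2/2)) ≤ 65536 * Real.exp (-(x^2/4)) := by
  have h2 : x^2/16 ≤ Real.exp (x^2/16) := by
    have := Real.add_one_le_exp (x^2/16)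
    linarith
  have h3 : (x^2/16)^4 ≤ (Real.exp (x^2/16))^4 :=
    pow_le_pow_left₀ (by positivity) h2 4
  have h4 : (Real.exp (x^2/16))^4 = Real.exp (x^2/4) := by
    rw [← Real.exp_nat_mul]
    congr 1
    ring
  have h5 : x ^ 8 ≤ 65536 * Real.exp (x^2/4) := by
    have : x^8 = 65536 * (x^2/16)^4 := by ring
    rw [this]
    have := h3.trans_eq h4
    nlinarith [Real.exp_pos (x^2/4)]
  have h6 : Real.exp (x^2/4) * Real.exp (-(x^2/2)) = Real.exp (-(x^2/4)) := by
    rw [← Real.exp_add]; congr 1; ring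
  calc x ^ 8 * Real.exp (-(x^2/2)) ≤ 65536 * Real.exp (x^2/4) * Real.exp (-(x^2/2)) := by
        have := Real.exp_pos (-(x^2/2))
        nlinarith
    _ = 65536 * Real.exp (-(x^2/4)) := by rw [mul_assoc, h6]

lemma M8_nonneg : 0 ≤ ∫ x, x ^ 8 ∂(gaussianReal 0 1) :=
  integral_nonneg fun x => by positivity

lemma M8_bound : ∫ x, x ^ 8 ∂(gaussianReal 0 1) ≤ 262144 := by
  rw [integral_gauss_eq]
  have hint2 : Integrable (fun x : ℝ => 65536 * Real.exp (-(4⁻¹ : ℝ) * x^2)) :=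
    (integrable_exp_neg_mul_sq (by norm_num)).const_mul _
  have hint1 : Integrable (fun x : ℝ => gaussianPDFReal 0 1 x * x ^ 8) := by
    have h2 : (fun x : ℝ => gaussianPDFReal 0 1 x * x ^ 8)
        = fun x : ℝ => (Real.sqrt (2*π))⁻¹ * (x ^ 8 * Real.exp (-(x^2/2))) := by
      funext x; rw [pdf01]; ring
    rw [h2]; exact integrable_pow8_exp.const_mul _
  have hpt : ∀ x : ℝ, gaussianPDFReal 0 1 x * x ^ 8
      ≤ 65536 * Real.exp (-(4⁻¹ : ℝ) * x^2) := by
    intro x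
    rw [pdf01]
    have hc : (Real.sqrt (2*π))⁻¹ ≤ 1 := by
      rw [inv_le_one_iff₀]
      right
      rw [show (1:ℝ) = Real.sqrt 1 by simp]
      exact Real.sqrt_le_sqrt (by nlinarith [Real.pi_gt_three])
    have h1 := pow8_exp_bound x
    have h2 : -(4⁻¹:ℝ) * x^2 = -(x^2/4) := by ring
    rw [h2]
    have hnn : (0:ℝ) ≤ x ^ 8 * Real.exp (-(x^2/2)) := by positivity
    calc (Real.sqrt (2*π))⁻¹ * Real.exp (-(x^2/2)) * x ^ 8
        ≤ 1 * (x ^ 8 * Real.exp (-(x^2/2))) := by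
          have hcnn : (0:ℝ) ≤ (Real.sqrt (2*π))⁻¹ := by positivity
          nlinarith [Real.exp_pos (-(x^2/2))]
      _ ≤ 65536 * Real.exp (-(x^2/4)) := by rw [one_mul]; exact h1
  have := integral_mono hint1 hint2 hpt
  refine this.trans ?_
  rw [integral_const_mul, integral_gaussian]
  have hdiv : π / 4⁻¹ = 4 * π := by ring
  have h16 : Real.sqrt (π / 4⁻¹) ≤ Real.sqrt 16 :=
    Real.sqrt_le_sqrt (by rw [hdiv]; nlinarith [Real.pi_le_four])
  have h16' : Real.sqrt 16 = 4 := by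
    rw [show (16:ℝ) = 4^2 by norm_num]
    exact Real.sqrt_sq (by norm_num)
  nlinarith [Real.sqrt_nonneg (π / 4⁻¹)]

lemma lint_gamma (s : ℝ) (hs : 0 < s) :
    ∫⁻ u in Ioi (0:ℝ), ENNReal.ofReal (u^3 * Real.exp (-(u * s)))
      = ENNReal.ofReal (6 / s^4) := by
  have hint : IntegrableOn (fun u : ℝ => u^3 * Real.exp (-(u*s))) (Ioi 0) := by
    have h := integrableOn_rpow_mul_exp_neg_mul_rpow
      (p := 1) (s := 3) (b := s) (by norm_num) one_pos hs
    refine h.congr_fun (fun x hx => ?_) measurableSet_Ioi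
    beta_reduce
    rw [Real.rpow_one, show (3:ℝ) = ((3:ℕ):ℝ) by norm_num, Real.rpow_natCast]
    congr 1
    ring
  have hval : ∫ u in Ioi (0:ℝ), u^3 * Real.exp (-(u*s)) = 6 / s^4 := by
    have h := Real.integral_rpow_mul_exp_neg_mul_Ioi (a := 4) (r := s) (by norm_num) hs
    have h2 : ∀ x ∈ Ioi (0:ℝ), x ^ ((4:ℝ)-1) * Real.exp (-(s*x)) = x^3 * Real.exp (-(x*s)) := by
      intro x hx
      rw [show (4:ℝ)-1 = ((3:ℕ):ℝ) by norm_num, Real.rpow_natCast]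
      ring_nf
    rw [setIntegral_congr_fun measurableSet_Ioi h2] at h
    rw [h, Real.Gamma_ofNat_eq_factorial 3]
    rw [show ((1:ℝ)/s) ^ (4:ℝ) = (1/s)^(4:ℕ) by
      rw [show (4:ℝ) = ((4:ℕ):ℝ) by norm_num, Real.rpow_natCast]]
    rw [show ((Nat.factorial 3 : ℕ) : ℝ) = 6 by norm_num [Nat.factorial]]
    field_simp
  rw [← ofReal_integral_eq_lintegral_ofReal hint ?_, hval]
  filter_upwards [ae_restrict_mem measurableSet_Ioi] with x hx
  have : (0:ℝ) < x := hx
  positivity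

lemma lint_tail (b : ℝ) (hb : 0 < b) (c : ℝ) (hc : 0 ≤ c) :
    ∫⁻ u in Ioi b, ENNReal.ofReal (c * u^(-2:ℝ)) = ENNReal.ofReal (c / b) := by
  have hint : IntegrableOn (fun u:ℝ => c * u^(-2:ℝ)) (Ioi b) :=
    (integrableOn_Ioi_rpow_of_lt (by norm_num) hb).const_mul c
  rw [← ofReal_integral_eq_lintegral_ofReal hint ?_]
  · congr 1
    rw [MeasureTheory.integral_const_mul, integral_Ioi_rpow_of_lt (by norm_num) hb]
    rw [show (-2:ℝ)+1 = -1 by norm_num, Real.rpow_neg_one]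
    field_simp
  · filter_upwards [ae_restrict_mem measurableSet_Ioi] with x hx
    have hx0 : (0:ℝ) < x := hb.trans hx
    have : (0:ℝ) ≤ x ^ (-2:ℝ) := Real.rpow_nonneg hx0.le _
    positivity



lemma pi_product_int (n : ℕ) (f : Fin n → ℝ → ℝ)
    (hint : ∀ t, Integrable (f t) (gaussianReal 0 1)) :
    Integrable (fun g : Fin n → ℝ => ∏ t, f t (g t)) (stdGaussian n) := by
  letI : MeasureSpace ℝ := ⟨gaussianReal 0 1⟩
  haveI : SigmaFinite (volume : Measure ℝ) := (inferInstance : SigmaFinite (gaussianReal 0 1))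
  have hvol : stdGaussian n = (volume : Measure (Fin n → ℝ)) := by
    rw [MeasureTheory.volume_pi]; rfl
  rw [hvol]
  exact Integrable.fintype_prod (f := f) hint

lemma pi_product (n : ℕ) (f : Fin n → ℝ → ℝ)
    (hint : ∀ t, Integrable (f t) (gaussianReal 0 1)) :
    ∫ g, ∏ t, f t (g t) ∂stdGaussian n = ∏ t, ∫ x, f t x ∂(gaussianReal 0 1) := by
  letI : MeasureSpace ℝ := ⟨gaussianReal 0 1⟩
  haveI : SigmaFinite (volume : Measure ℝ) := (inferInstance : SigmaFinite (gaussianReal 0 1))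
  have hvol : stdGaussian n = (volume : Measure (Fin n → ℝ)) := by
    rw [MeasureTheory.volume_pi]; rfl
  rw [hvol]
  exact MeasureTheory.integral_fintype_prod_eq_prod f


set_option maxHeartbeats 2000000 in
lemma T_bound (n : ℕ) (hn : 17 ≤ n) (j : Fin n) :
    ∫⁻ g, ENNReal.ofReal ((g j)^8 / (∑ t ∈ Finset.univ.erase j, g t ^ 2)^4) ∂stdGaussian n
      ≤ ENNReal.ofReal (262144 * 3126 * 256 / (n:ℝ)^4) := by
  classical
  set S : (Fin n → ℝ) → ℝ := fun g => ∑ t ∈ Finset.univ.erase j, g t ^ 2 with hS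
  show ∫⁻ g, ENNReal.ofReal ((g j)^8 / (S g)^4) ∂stdGaussian n
      ≤ ENNReal.ofReal (262144 * 3126 * 256 / (n:ℝ)^4)
  set k : ℕ := (n-1)/2 with hk
  set m : ℕ := k/5 with hm
  have hk8 : 8 ≤ k := by omega
  have hkm : k ≤ 10 * m := by omega
  have h2k : 2*k ≤ n - 1 := by omega
  have hkn : n ≤ 4*k := by omega
  have hm1 : 1 ≤ m := by omega
  have hkpos : (0:ℝ) < (k:ℝ) := by
    have : 0 < k := by omega
    exact_mod_cast this
  have hmpos : (0:ℝ) < (m:ℝ) := by exact_mod_cast hm1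
  set b : ℝ := 1/(k:ℝ) with hb
  have hbpos : 0 < b := by positivity
  have hSmeas : Measurable S := by
    apply Finset.measurable_sum
    intro t _
    exact (measurable_pi_apply t).pow_const 2
  have hne : (Finset.univ.erase j).Nonempty := by
    rw [← Finset.card_pos, Finset.card_erase_of_mem (Finset.mem_univ j), Finset.card_univ,
      Fintype.card_fin]
    omega
  set F : (Fin n → ℝ) → ℝ → ℝ≥0∞ :=
    fun g u => ENNReal.ofReal ((6⁻¹ * (g j)^8) * (u^3 * Real.exp (-(u * S g)))) with hF
  have step1 : ∫⁻ g, ENNReal.ofReal ((g j)^8 / (S g)^4) ∂stdGaussian n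
      = ∫⁻ g, ∫⁻ u in Ioi (0:ℝ), F g u ∂volume ∂stdGaussian n := by
    refine lintegral_congr_ae ?_
    filter_upwards [ae_pos (Finset.univ.erase j) hne] with g hg
    have hg' : 0 < S g := hg
    have hc : (0:ℝ) ≤ 6⁻¹ * (g j)^8 := by positivity
    calc ENNReal.ofReal ((g j)^8 / (S g)^4)
        = ENNReal.ofReal (6⁻¹ * (g j)^8) * ENNReal.ofReal (6/(S g)^4) := by
          rw [← ENNReal.ofReal_mul hc]
          congr 1
          field_simp
      _ = ENNReal.ofReal (6⁻¹ * (g j)^8)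
            * ∫⁻ u in Ioi (0:ℝ), ENNReal.ofReal (u^3 * Real.exp (-(u * S g))) ∂volume := by
          rw [lint_gamma (S g) hg']
      _ = ∫⁻ u in Ioi (0:ℝ), F g u ∂volume := by
          rw [← lintegral_const_mul' _ _ ENNReal.ofReal_ne_top]
          refine lintegral_congr fun u => ?_
          simp only [hF]
          exact (ENNReal.ofReal_mul hc).symm
  have hFmeas : Measurable (Function.uncurry F) := by
    apply Measurable.ennreal_ofReal
    apply Measurable.mul
    · exact (((measurable_pi_apply j).comp measurable_fst).pow_const 8).const_mul _
    · apply Measurable.mul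
      · exact measurable_snd.pow_const 3
      · exact ((measurable_snd.mul (hSmeas.comp measurable_fst)).neg).exp
  have step2 : ∫⁻ g, ∫⁻ u in Ioi (0:ℝ), F g u ∂volume ∂stdGaussian n
      = ∫⁻ u in Ioi (0:ℝ), ∫⁻ g, F g u ∂stdGaussian n ∂volume :=
    lintegral_lintegral_swap hFmeas.aemeasurable
  set Ie : ℝ → ℝ := fun u => ∫ x, Real.exp (-(u * x^2)) ∂(gaussianReal 0 1) with hIe
  set M8 : ℝ := ∫ x, (x:ℝ)^8 ∂(gaussianReal 0 1) with hM8
  have step3 : ∀ u : ℝ, 0 < u → ∫⁻ g, F g u ∂stdGaussian n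
      = ENNReal.ofReal (6⁻¹ * u^3) * ENNReal.ofReal (M8 * Ie u ^ (n-1)) := by
    intro u hu
    set f : Fin n → ℝ → ℝ := fun t x => if t = j then x^8 else Real.exp (-(u * x^2)) with hf
    have hfint : ∀ t, Integrable (f t) (gaussianReal 0 1) := by
      intro t
      by_cases ht : t = j
      · simpa [hf, ht] using integrable_pow8_gauss
      · simpa [hf, ht] using integrable_exp_gauss u hu.le
    have hprod : ∀ g : Fin n → ℝ,
        (6⁻¹ * (g j)^8) * (u^3 * Real.exp (-(u * S g)))
          = (6⁻¹ * u^3) * ∏ t, f t (g t) := by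
      intro g
      have h1 : ∏ t, f t (g t) = (g j)^8 * ∏ t ∈ Finset.univ.erase j, f t (g t) := by
        rw [← Finset.mul_prod_erase Finset.univ _ (Finset.mem_univ j)]
        simp [hf]
      have h2 : ∏ t ∈ Finset.univ.erase j, f t (g t) = Real.exp (-(u * S g)) := by
        have hcg : ∀ t ∈ Finset.univ.erase j, f t (g t) = Real.exp (-(u * g t ^2)) := by
          intro t ht
          simp [hf, (Finset.mem_erase.mp ht).1]
        rw [Finset.prod_congr rfl hcg, ← Real.exp_sum]
        congr 1
        rw [hS]
        simp only []
        rw [Finset.mul_sum, ← Finset.sum_neg_distrib]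
      rw [h1, h2]
      ring
    have hnn : ∀ g : Fin n → ℝ, 0 ≤ ∏ t, f t (g t) := by
      intro g
      apply Finset.prod_nonneg
      intro t _
      by_cases ht : t = j
      · simp only [hf, ht, if_pos]
        positivity
      · simp only [hf, ht, if_neg, if_false]
        positivity
    calc ∫⁻ g, F g u ∂stdGaussian n
        = ∫⁻ g, ENNReal.ofReal (6⁻¹*u^3) * ENNReal.ofReal (∏ t, f t (g t)) ∂stdGaussian n := by
          refine lintegral_congr fun g => ?_
          simp only [hF]
          rw [hprod g, ENNReal.ofReal_mul (mul_nonneg (by norm_num) (pow_nonneg hu.le 3))]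
      _ = ENNReal.ofReal (6⁻¹*u^3) * ∫⁻ g, ENNReal.ofReal (∏ t, f t (g t)) ∂stdGaussian n :=
          lintegral_const_mul' _ _ ENNReal.ofReal_ne_top
      _ = ENNReal.ofReal (6⁻¹ * u^3) * ENNReal.ofReal (M8 * Ie u ^ (n-1)) := by
          rw [← ofReal_integral_eq_lintegral_ofReal (pi_product_int n f hfint)
            (ae_of_all _ hnn)]
          congr 2
          rw [pi_product n f hfint]
          rw [← Finset.mul_prod_erase Finset.univ _ (Finset.mem_univ j)]
          have e1 : ∫ x, f j x ∂(gaussianReal 0 1) = M8 := by simp [hf, hM8]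
          have e2 : ∀ t ∈ Finset.univ.erase j, ∫ x, f t x ∂(gaussianReal 0 1) = Ie u := by
            intro t ht
            simp [hf, (Finset.mem_erase.mp ht).1, hIe]
          rw [e1, Finset.prod_congr rfl e2, Finset.prod_const,
            Finset.card_erase_of_mem (Finset.mem_univ j), Finset.card_univ, Fintype.card_fin]
  have hIbound : ∀ u : ℝ, 0 < u →
      6⁻¹*u^3 * (M8 * Ie u ^ (n-1)) ≤ 262144 * (u^3 * (1/(1+2*u))^k) := by
    intro u hu
    have h0 : 0 ≤ Ie u := exp_gauss_nonneg u
    have h1 : Ie u ≤ 1 := exp_gauss_le_one u hu.le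
    have hpow : Ie u ^ (n-1) ≤ (1/(1+2*u))^k := by
      calc Ie u ^ (n-1) = (Ie u ^ 2)^k * Ie u ^ (n-1-2*k) := by
            rw [← pow_mul, ← pow_add]
            congr 1
            omega
        _ ≤ (Ie u ^2)^k * 1 :=
            mul_le_mul_of_nonneg_left (pow_le_one₀ h0 h1) (by positivity)
        _ = (1/(1+2*u))^k := by rw [mul_one, exp_gauss_sq u hu.le]
    have hM8b : M8 ≤ 262144 := M8_bound
    have hq : (0:ℝ) ≤ (1/(1+2*u))^k := by positivity
    have hu3 : (0:ℝ) ≤ u^3 := by positivity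
    have hIen : (0:ℝ) ≤ Ie u ^ (n-1) := by positivity
    calc 6⁻¹*u^3 * (M8 * Ie u ^ (n-1)) ≤ 6⁻¹*u^3 * (262144 * (1/(1+2*u))^k) := by
          refine mul_le_mul_of_nonneg_left ?_ (by positivity)
          calc M8 * Ie u ^ (n-1) ≤ 262144 * Ie u ^ (n-1) :=
                mul_le_mul_of_nonneg_right hM8b hIen
            _ ≤ 262144 * (1/(1+2*u))^k := mul_le_mul_of_nonneg_left hpow (by norm_num)
      _ ≤ 262144 * (u^3 * (1/(1+2*u))^k) := by nlinarith [mul_nonneg hu3 hq]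
  set Qf : ℝ → ℝ≥0∞ := fun u => ENNReal.ofReal (262144 * (u^3 * (1/(1+2*u))^k)) with hQf
  have hmain : ∫⁻ u in Ioi (0:ℝ), ∫⁻ g, F g u ∂stdGaussian n ∂volume
      ≤ ∫⁻ u in Ioi (0:ℝ), Qf u ∂volume := by
    refine lintegral_mono_ae ?_
    filter_upwards [ae_restrict_mem measurableSet_Ioi] with u hu
    rw [step3 u hu, ← ENNReal.ofReal_mul (mul_nonneg (by norm_num) (pow_nonneg (le_of_lt hu) 3))]
    exact ENNReal.ofReal_le_ofReal (hIbound u hu)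
  have hsplit : ∫⁻ u in Ioi (0:ℝ), Qf u ∂volume
      = (∫⁻ u in Ioc (0:ℝ) b, Qf u ∂volume) + ∫⁻ u in Ioi b, Qf u ∂volume := by
    rw [← Set.Ioc_union_Ioi_eq_Ioi hbpos.le]
    exact lintegral_union measurableSet_Ioi (Set.Ioc_disjoint_Ioi le_rfl)
  have hJ1 : ∫⁻ u in Ioc (0:ℝ) b, Qf u ∂volume ≤ ENNReal.ofReal (262144 / (k:ℝ)^4) := by
    have hb1 : ∀ᵐ u ∂(volume.restrict (Ioc (0:ℝ) b)),
        Qf u ≤ ENNReal.ofReal (262144 * b^3) := by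
      filter_upwards [ae_restrict_mem measurableSet_Ioc] with u hu
      apply ENNReal.ofReal_le_ofReal
      have hu0 : 0 < u := hu.1
      have hub : u ≤ b := hu.2
      have hQle1 : (1/(1+2*u))^k ≤ 1 := by
        apply pow_le_one₀ (by positivity)
        rw [div_le_one (by linarith)]
        linarith
      have hcube : u^3 ≤ b^3 := pow_le_pow_left₀ hu0.le hub 3
      nlinarith [pow_nonneg hu0.le 3, pow_nonneg (le_of_lt hbpos) 3,
        pow_nonneg (by positivity : (0:ℝ) ≤ 1/(1+2*u)) k]
    calc ∫⁻ u in Ioc (0:ℝ) b, Qf u ∂volume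
        ≤ ∫⁻ _ in Ioc (0:ℝ) b, ENNReal.ofReal (262144*b^3) ∂volume := lintegral_mono_ae hb1
      _ = ENNReal.ofReal (262144*b^3) * volume (Ioc (0:ℝ) b) := setLIntegral_const _ _
      _ = ENNReal.ofReal (262144*b^3) * ENNReal.ofReal b := by
          rw [Real.volume_Ioc]
          norm_num
      _ = ENNReal.ofReal (262144*b^3*b) := by rw [← ENNReal.ofReal_mul (by positivity)]
      _ = ENNReal.ofReal (262144/(k:ℝ)^4) := by
          congr 1
          rw [hb]
          field_simp
  set c2 : ℝ := 262144 / (32*(m:ℝ)^5) with hc2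
  have hc2nn : 0 ≤ c2 := by positivity
  have hJ2 : ∫⁻ u in Ioi b, Qf u ∂volume ≤ ENNReal.ofReal (262144*3125/(k:ℝ)^4) := by
    have hb2 : ∀ᵐ u ∂(volume.restrict (Ioi b)),
        Qf u ≤ ENNReal.ofReal (c2 * u^(-2:ℝ)) := by
      filter_upwards [ae_restrict_mem measurableSet_Ioi] with u hu
      have hu0 : 0 < u := hbpos.trans hu
      apply ENNReal.ofReal_le_ofReal
      have hbern : 2*u*(m:ℝ) ≤ (1+2*u)^m := by
        have h := one_add_mul_le_pow (a := 2*u) (by linarith) m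
        nlinarith
      have hpow5 : (2*u*(m:ℝ))^5 ≤ ((1+2*u)^m)^5 :=
        pow_le_pow_left₀ (by positivity) hbern 5
      have hfinal : 32*u^5*(m:ℝ)^5 ≤ (1+2*u)^k := by
        calc 32*u^5*(m:ℝ)^5 = (2*u*(m:ℝ))^5 := by ring
          _ ≤ ((1+2*u)^m)^5 := hpow5
          _ = (1+2*u)^(m*5) := by rw [← pow_mul]
          _ ≤ (1+2*u)^k := by
              apply pow_le_pow_right₀ (by linarith)
              omega
      have h1p : (0:ℝ) < 1+2*u := by linarith
      have hden : (0:ℝ) < 32*u^5*(m:ℝ)^5 := by positivity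
      have hQ : (1/(1+2*u))^k ≤ 1/(32*u^5*(m:ℝ)^5) := by
        rw [div_pow, one_pow]
        exact one_div_le_one_div_of_le hden hfinal
      have hrpow : u^(-2:ℝ) = (u^2)⁻¹ := by
        rw [Real.rpow_neg hu0.le, show (2:ℝ) = ((2:ℕ):ℝ) by norm_num, Real.rpow_natCast]
      calc 262144*(u^3*(1/(1+2*u))^k) ≤ 262144*(u^3*(1/(32*u^5*(m:ℝ)^5))) := by
            refine mul_le_mul_of_nonneg_left ?_ (by norm_num)
            exact mul_le_mul_of_nonneg_left hQ (by positivity)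
        _ = c2 * u^(-2:ℝ) := by
            rw [hrpow, hc2]
            field_simp
    calc ∫⁻ u in Ioi b, Qf u ∂volume
        ≤ ∫⁻ u in Ioi b, ENNReal.ofReal (c2*u^(-2:ℝ)) ∂volume := lintegral_mono_ae hb2
      _ = ENNReal.ofReal (c2/b) := lint_tail b hbpos c2 hc2nn
      _ ≤ ENNReal.ofReal (262144*3125/(k:ℝ)^4) := by
          apply ENNReal.ofReal_le_ofReal
          have hcb : c2/b = 262144*(k:ℝ)/(32*(m:ℝ)^5) := by
            rw [hc2, hb]
            field_simp
          rw [hcb, div_le_div_iff₀ (by positivity) (by positivity)]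
          have h5 : (k:ℝ)^5 ≤ (10*(m:ℝ))^5 := by
            apply pow_le_pow_left₀ (by positivity)
            exact_mod_cast hkm
          nlinarith [h5]
  calc ∫⁻ g, ENNReal.ofReal ((g j)^8 / (S g)^4) ∂stdGaussian n
      = ∫⁻ u in Ioi (0:ℝ), ∫⁻ g, F g u ∂stdGaussian n ∂volume := by rw [step1, step2]
    _ ≤ ∫⁻ u in Ioi (0:ℝ), Qf u ∂volume := hmain
    _ = (∫⁻ u in Ioc (0:ℝ) b, Qf u ∂volume) + ∫⁻ u in Ioi b, Qf u ∂volume := hsplit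
    _ ≤ ENNReal.ofReal (262144 / (k:ℝ)^4) + ENNReal.ofReal (262144*3125/(k:ℝ)^4) :=
        add_le_add hJ1 hJ2
    _ = ENNReal.ofReal (262144 / (k:ℝ)^4 + 262144*3125/(k:ℝ)^4) :=
        (ENNReal.ofReal_add (by positivity) (by positivity)).symm
    _ ≤ ENNReal.ofReal (262144 * 3126 * 256 / (n:ℝ)^4) := by
        apply ENNReal.ofReal_le_ofReal
        have hncast : (n:ℝ) ≤ 4*(k:ℝ) := by exact_mod_cast hkn
        have hnpos : (0:ℝ) < (n:ℝ) := by
          have : 0 < n := by omega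
          exact_mod_cast this
        have h4 : (n:ℝ)^4 ≤ (4*(k:ℝ))^4 := pow_le_pow_left₀ hnpos.le hncast 4
        rw [← add_div, div_le_div_iff₀ (by positivity) (by positivity)]
        nlinarith [h4, pow_pos hkpos 4, pow_pos hnpos 4]

lemma quad_ineq (a t : ℝ) : (a - t)^4 ≤ 8*a^4 + 8*t^4 := by
  nlinarith [sq_nonneg (a+t), sq_nonneg (a-t), sq_nonneg (a*t), sq_nonneg (a^2 - t^2),
    sq_nonneg (a^2 + t^2), sq_nonneg ((a-t)^2)]

lemma Q_bound (n : ℕ) (hn : 17 ≤ n) (j : Fin n) :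
    ∫ g, (Xc n j g)^4 ∂stdGaussian n ≤ (8 + 8*(262144 * 3126 * 256)) / (n:ℝ)^4 := by
  have hn1 : 1 ≤ n := by omega
  have hnpos : (0:ℝ) < n := by
    have : 0 < n := by omega
    exact_mod_cast this
  set R : (Fin n → ℝ) → ℝ := fun g => (g j ^ 2 / (∑ t, g t ^ 2))^4 with hR
  have hRmeas : Measurable R := by
    apply Measurable.pow_const
    apply Measurable.div
    · exact (measurable_pi_apply j).pow_const 2
    · exact Finset.measurable_sum _ fun t _ => (measurable_pi_apply t).pow_const 2
  have hRbd : ∀ g, |R g| ≤ 1 := by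
    intro g
    rw [hR]
    simp only []
    rw [abs_pow]
    apply pow_le_one₀ (abs_nonneg _)
    rw [abs_le]
    exact ⟨by linarith [ratio_nonneg j g], ratio_le_one j g⟩
  have hRint : Integrable R (stdGaussian n) := integrable_of_bounded hRmeas 1 hRbd
  have hXint : Integrable (fun g => (Xc n j g)^4) (stdGaussian n) := by
    refine integrable_of_bounded ((Xc_meas j).pow_const 4) 1 fun g => ?_
    rw [abs_pow]
    exact pow_le_one₀ (abs_nonneg _) (abs_Xc_le_one hn1 j g)
  -- pointwise comparison
  have hpt : ∀ g, (Xc n j g)^4 ≤ 8 * R g + 8/(n:ℝ)^4 := by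
    intro g
    rw [Xc_eq, hR]
    simp only []
    have h := quad_ineq (g j ^ 2 / (∑ t, g t ^ 2)) (1/(n:ℝ))
    have h2 : 8*(1/(n:ℝ))^4 = 8/(n:ℝ)^4 := by field_simp
    calc (g j ^ 2 / (∑ t, g t ^ 2) - 1/(n:ℝ))^4
        ≤ 8*(g j ^ 2 / (∑ t, g t ^ 2))^4 + 8*(1/(n:ℝ))^4 := h
      _ = 8 * (g j ^ 2 / (∑ t, g t ^ 2))^4 + 8/(n:ℝ)^4 := by rw [h2]
  have hmono : ∫ g, (Xc n j g)^4 ∂stdGaussian n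
      ≤ ∫ g, (8 * R g + 8/(n:ℝ)^4) ∂stdGaussian n := by
    refine integral_mono hXint ?_ hpt
    exact (hRint.const_mul 8).add (integrable_const _)
  -- bound ∫ R via the lintegral estimate
  have hRbound : ∫ g, R g ∂stdGaussian n ≤ (262144 * 3126 * 256) / (n:ℝ)^4 := by
    have hRnn : ∀ g, 0 ≤ R g := fun g => by rw [hR]; positivity
    rw [integral_eq_lintegral_of_nonneg_ae (ae_of_all _ hRnn) hRmeas.aestronglyMeasurable]
    have hle : ∫⁻ g, ENNReal.ofReal (R g) ∂stdGaussian n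
        ≤ ENNReal.ofReal (262144 * 3126 * 256 / (n:ℝ)^4) := by
      refine le_trans (lintegral_mono_ae ?_) (T_bound n hn j)
      have hne : (Finset.univ.erase j).Nonempty := by
        rw [← Finset.card_pos, Finset.card_erase_of_mem (Finset.mem_univ j),
          Finset.card_univ, Fintype.card_fin]
        omega
      filter_upwards [ae_pos (Finset.univ.erase j) hne] with g hg
      apply ENNReal.ofReal_le_ofReal
      rw [hR]
      simp only []
      have hS'pos : 0 < ∑ t ∈ Finset.univ.erase j, g t ^ 2 := hg
      have hSS : (∑ t ∈ Finset.univ.erase j, g t ^ 2) ≤ ∑ t, g t ^ 2 := by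
        refine Finset.sum_le_sum_of_subset_of_nonneg (Finset.erase_subset _ _) ?_
        intro t _ _
        positivity
      have hSpos : 0 < ∑ t, g t ^ 2 := lt_of_lt_of_le hS'pos hSS
      have heq : (g j ^ 2 / (∑ t, g t ^ 2))^4 = (g j)^8 / (∑ t, g t ^ 2)^4 := by
        rw [div_pow]
        congr 1
        ring
      rw [heq]
      apply div_le_div_of_nonneg_left (by positivity) (by positivity)
      exact pow_le_pow_left₀ hS'pos.le hSS 4
    calc (∫⁻ g, ENNReal.ofReal (R g) ∂stdGaussian n).toReal
        ≤ (ENNReal.ofReal (262144 * 3126 * 256 / (n:ℝ)^4)).toReal :=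
          ENNReal.toReal_mono ENNReal.ofReal_ne_top hle
      _ = 262144 * 3126 * 256 / (n:ℝ)^4 := ENNReal.toReal_ofReal (by positivity)
  -- conclude
  have hconst : ∫ g, (8 * R g + 8/(n:ℝ)^4) ∂stdGaussian n
      = 8 * (∫ g, R g ∂stdGaussian n) + 8/(n:ℝ)^4 := by
    rw [integral_add (hRint.const_mul 8) (integrable_const _), integral_const_mul,
      integral_const]
    simp [measure_univ]
  rw [hconst] at hmono
  have : 8 * (∫ g, R g ∂stdGaussian n) + 8/(n:ℝ)^4
      ≤ 8 * ((262144 * 3126 * 256) / (n:ℝ)^4) + 8/(n:ℝ)^4 := by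
    nlinarith [hRbound]
  calc ∫ g, (Xc n j g)^4 ∂stdGaussian n
      ≤ 8 * ((262144 * 3126 * 256) / (n:ℝ)^4) + 8/(n:ℝ)^4 := le_trans hmono this
    _ = (8 + 8*(262144 * 3126 * 256)) / (n:ℝ)^4 := by field_simp; ring

lemma P_single (m : Fin n) (g : Fin n → ℝ) : P n (Pi.single m 1) g = Xc n m g := by
  have h := P_add_single (0 : Fin n → ℕ) m g
  rw [zero_add] at h
  rw [h, P_zero, mul_one]

lemma P4 (p q r s : Fin n) (g : Fin n → ℝ) :
    P n (Pi.single p 1 + Pi.single q 1 + Pi.single r 1 + Pi.single s 1) g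
      = Xc n p g * Xc n q g * Xc n r g * Xc n s g := by
  rw [P_add_single, P_add_single, P_add_single, P_single]
  ring

lemma add_comp' (a b : Fin n → ℕ) (σ : Equiv.Perm (Fin n)) :
    (a + b) ∘ σ = a ∘ σ + b ∘ σ := rfl

lemma swap_single (w1 w2 r : Fin n) (c : ℕ) :
    (Pi.single r c : Fin n → ℕ) ∘ (Equiv.swap w1 w2) = Pi.single ((Equiv.swap w1 w2) r) c := by
  rw [single_comp_perm, Equiv.symm_swap]

lemma EI4_nonneg_sq (p q : Fin n) (hn1 : 1 ≤ n) :
    0 ≤ EI n (Pi.single p 1 + Pi.single p 1 + Pi.single q 1 + Pi.single q 1) := by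
  unfold EI
  apply integral_nonneg
  intro g
  rw [P4]
  have : Xc n p g * Xc n p g * Xc n q g * Xc n q g = (Xc n p g * Xc n q g)^2 := by ring
  rw [this]
  positivity

set_option maxHeartbeats 1000000 in
lemma A_bound (n : ℕ) (hn : 17 ≤ n) (i j k l : Fin n)
    (hij : i ≠ j) (hik : i ≠ k) (hil : i ≠ l) (hjk : j ≠ k) (hjl : j ≠ l) (hkl : k ≠ l) :
    |EI n (Pi.single j 1 + Pi.single k 1 + Pi.single l 1 + Pi.single i 1)|
      ≤ 24 * (8 + 8*(262144 * 3126 * 256)) / (n:ℝ)^6 := by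
  classical
  have hn1 : 1 ≤ n := by omega
  set sj := (Pi.single j 1 : Fin n → ℕ)
  set sk := (Pi.single k 1 : Fin n → ℕ)
  set sl := (Pi.single l 1 : Fin n → ℕ)
  set si := (Pi.single i 1 : Fin n → ℕ)
  set A := EI n (sj + sk + sl + si) with hA
  set Cc := EI n (sj + sk + sl + sj) with hCc
  set D := EI n (sj + sj + sk + sj) with hD
  set E := EI n (sj + sj + sk + sk) with hE
  set Qm := EI n (sj + sj + sj + sj) with hQm
  -- permutation facts
  have g1 : ∀ m : Fin n, m ≠ j → m ≠ k → m ≠ l → EI n (sj + sk + sl + Pi.single m 1) = A := by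
    intro m hmj hmk hml
    by_cases hmi : m = i
    · rw [hmi, hA]
    · have h := EI_perm (Equiv.swap i m) (sj + sk + sl + si)
      have hvec : (sj + sk + sl + si) ∘ (Equiv.swap i m) = sj + sk + sl + Pi.single m 1 := by
        rw [add_comp', add_comp', add_comp', swap_single, swap_single, swap_single, swap_single,
          Equiv.swap_apply_left,
          Equiv.swap_apply_of_ne_of_ne (Ne.symm hij) (Ne.symm hmj),
          Equiv.swap_apply_of_ne_of_ne (Ne.symm hik) (Ne.symm hmk),
          Equiv.swap_apply_of_ne_of_ne (Ne.symm hil) (Ne.symm hml)]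
      rw [hvec] at h
      rw [h, hA]
  have g2 : EI n (sj + sk + sl + sk) = Cc := by
    have h := EI_perm (Equiv.swap j k) (sj + sk + sl + sj)
    have hvec : (sj + sk + sl + sj) ∘ (Equiv.swap j k) = sk + sj + sl + sk := by
      rw [add_comp', add_comp', add_comp', swap_single, swap_single, swap_single,
        Equiv.swap_apply_left, Equiv.swap_apply_right,
        Equiv.swap_apply_of_ne_of_ne (Ne.symm hjl) (Ne.symm hkl)]
    rw [hvec] at h
    rw [hCc, ← h]
    congr 1
    abel
  have g3 : EI n (sj + sk + sl + sl) = Cc := by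
    have h := EI_perm (Equiv.swap j l) (sj + sk + sl + sj)
    have hvec : (sj + sk + sl + sj) ∘ (Equiv.swap j l) = sl + sk + sj + sl := by
      rw [add_comp', add_comp', add_comp', swap_single, swap_single, swap_single,
        Equiv.swap_apply_left,
        Equiv.swap_apply_of_ne_of_ne (Ne.symm hjk) hkl,
        Equiv.swap_apply_right]
    rw [hvec] at h
    rw [hCc, ← h]
    congr 1
    abel
  have g4 : ∀ m : Fin n, m ≠ j → m ≠ k → EI n (sj + sj + sk + Pi.single m 1) = Cc := by
    intro m hmj hmk
    have h := EI_perm (Equiv.swap l m) (sj + sk + sl + sj)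
    have hvec : (sj + sk + sl + sj) ∘ (Equiv.swap l m)
        = sj + sk + Pi.single m 1 + sj := by
      rw [add_comp', add_comp', add_comp', swap_single, swap_single, swap_single,
        Equiv.swap_apply_of_ne_of_ne hjl (Ne.symm hmj),
        Equiv.swap_apply_of_ne_of_ne hkl (Ne.symm hmk),
        Equiv.swap_apply_left]
    rw [hvec] at h
    rw [hCc, ← h]
    congr 1
    abel
  have g5 : ∀ m : Fin n, m ≠ j → EI n (sj + sj + sj + Pi.single m 1) = D := by
    intro m hmj
    have h := EI_perm (Equiv.swap k m) (sj + sj + sk + sj)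
    have hvec : (sj + sj + sk + sj) ∘ (Equiv.swap k m)
        = sj + sj + Pi.single m 1 + sj := by
      rw [add_comp', add_comp', add_comp', swap_single, swap_single,
        Equiv.swap_apply_of_ne_of_ne hjk (Ne.symm hmj),
        Equiv.swap_apply_left]
    rw [hvec] at h
    rw [hD, ← h]
    congr 1
    abel
  have g6 : EI n (sk + sk + sk + sk) = Qm := by
    have h := EI_perm (Equiv.swap j k) (sj + sj + sj + sj)
    have hvec : (sj + sj + sj + sj) ∘ (Equiv.swap j k) = sk + sk + sk + sk := by
      rw [add_comp', add_comp', add_comp', swap_single,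
        Equiv.swap_apply_left]
    rw [hvec] at h
    rw [h, hQm]
  -- relations from the a.s. vanishing sum
  have hr1 : 3 * Cc + ((n:ℝ) - 3) * A = 0 := by
    have hrel := EI_relation hn1 (sj + sk + sl)
    rw [← Finset.sum_add_sum_compl ({j, k, l} : Finset (Fin n))] at hrel
    have hs1 : ∑ m ∈ ({j, k, l} : Finset (Fin n)), EI n (sj + sk + sl + Pi.single m 1)
        = 3 * Cc := by
      rw [Finset.sum_insert (by simp [hjk, hjl]), Finset.sum_insert (by simp [hkl]),
        Finset.sum_singleton]
      rw [show EI n (sj + sk + sl + Pi.single j 1) = Cc from hCc.symm, g2, g3]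
      ring
    have hs2 : ∑ m ∈ ({j, k, l} : Finset (Fin n))ᶜ, EI n (sj + sk + sl + Pi.single m 1)
        = ((n:ℝ) - 3) * A := by
      have hcongr : ∀ m ∈ ({j, k, l} : Finset (Fin n))ᶜ,
          EI n (sj + sk + sl + Pi.single m 1) = A := by
        intro m hm
        rw [Finset.mem_compl] at hm
        simp only [Finset.mem_insert, Finset.mem_singleton, not_or] at hm
        exact g1 m hm.1 hm.2.1 hm.2.2
      rw [Finset.sum_congr rfl hcongr, Finset.sum_const, Finset.card_compl]
      have hcard : ({j, k, l} : Finset (Fin n)).card = 3 := by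
        rw [Finset.card_insert_of_notMem (by simp [hjk, hjl]),
          Finset.card_insert_of_notMem (by simp [hkl]), Finset.card_singleton]
      rw [hcard, Fintype.card_fin, nsmul_eq_mul, Nat.cast_sub (by omega)]
      norm_num
    rw [hs1, hs2] at hrel
    linarith
  have hr2 : D + E + ((n:ℝ) - 2) * Cc = 0 := by
    have hrel := EI_relation hn1 (sj + sj + sk)
    rw [← Finset.sum_add_sum_compl ({j, k} : Finset (Fin n))] at hrel
    have hs1 : ∑ m ∈ ({j, k} : Finset (Fin n)), EI n (sj + sj + sk + Pi.single m 1)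
        = D + E := by
      rw [Finset.sum_insert (by simp [hjk]), Finset.sum_singleton]
    have hs2 : ∑ m ∈ ({j, k} : Finset (Fin n))ᶜ, EI n (sj + sj + sk + Pi.single m 1)
        = ((n:ℝ) - 2) * Cc := by
      have hcongr : ∀ m ∈ ({j, k} : Finset (Fin n))ᶜ,
          EI n (sj + sj + sk + Pi.single m 1) = Cc := by
        intro m hm
        rw [Finset.mem_compl] at hm
        simp only [Finset.mem_insert, Finset.mem_singleton, not_or] at hm
        exact g4 m hm.1 hm.2
      rw [Finset.sum_congr rfl hcongr, Finset.sum_const, Finset.card_compl]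
      have hcard : ({j, k} : Finset (Fin n)).card = 2 := by
        rw [Finset.card_insert_of_notMem (by simp [hjk]), Finset.card_singleton]
      rw [hcard, Fintype.card_fin, nsmul_eq_mul, Nat.cast_sub (by omega)]
      norm_num
    rw [hs1, hs2] at hrel
    linarith
  have hr3 : Qm + ((n:ℝ) - 1) * D = 0 := by
    have hrel := EI_relation hn1 (sj + sj + sj)
    rw [← Finset.sum_add_sum_compl ({j} : Finset (Fin n))] at hrel
    have hs1 : ∑ m ∈ ({j} : Finset (Fin n)), EI n (sj + sj + sj + Pi.single m 1) = Qm := by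
      rw [Finset.sum_singleton]
    have hs2 : ∑ m ∈ ({j} : Finset (Fin n))ᶜ, EI n (sj + sj + sj + Pi.single m 1)
        = ((n:ℝ) - 1) * D := by
      have hcongr : ∀ m ∈ ({j} : Finset (Fin n))ᶜ,
          EI n (sj + sj + sj + Pi.single m 1) = D := by
        intro m hm
        rw [Finset.mem_compl, Finset.mem_singleton] at hm
        exact g5 m hm
      rw [Finset.sum_congr rfl hcongr, Finset.sum_const, Finset.card_compl,
        Finset.card_singleton, Fintype.card_fin, nsmul_eq_mul, Nat.cast_sub (by omega)]
      norm_num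
    rw [hs1, hs2] at hrel
    linarith
  -- basic bounds
  have hQm_eq : Qm = ∫ g, (Xc n j g)^4 ∂stdGaussian n := by
    rw [hQm]
    unfold EI
    congr 1
    funext g
    rw [P4]
    ring
  have hQm_nn : 0 ≤ Qm := by
    rw [hQm_eq]
    apply integral_nonneg
    intro g
    positivity
  have hQm_bd : Qm ≤ (8 + 8*(262144 * 3126 * 256)) / (n:ℝ)^4 := by
    rw [hQm_eq]
    exact Q_bound n hn j
  have hE_nn : 0 ≤ E := by
    rw [hE]
    exact EI4_nonneg_sq j k hn1
  have hE_le : E ≤ Qm := by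
    have hQk_eq : EI n (sk + sk + sk + sk) = ∫ g, (Xc n k g)^4 ∂stdGaussian n := by
      unfold EI
      congr 1
      funext g
      rw [P4]
      ring
    have hmono : E ≤ (Qm + EI n (sk + sk + sk + sk))/2 := by
      rw [hE, hQm_eq, hQk_eq]
      unfold EI
      rw [div_eq_inv_mul, ← integral_add
        (integrable_of_bounded ((Xc_meas j).pow_const 4) 1 fun g => by
          rw [abs_pow]; exact pow_le_one₀ (abs_nonneg _) (abs_Xc_le_one hn1 j g))
        (integrable_of_bounded ((Xc_meas k).pow_const 4) 1 fun g => by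
          rw [abs_pow]; exact pow_le_one₀ (abs_nonneg _) (abs_Xc_le_one hn1 k g)),
        ← integral_const_mul]
      refine integral_mono (integrable_P hn1 _) ?_ ?_
      · refine Integrable.const_mul ?_ _
        exact (integrable_of_bounded ((Xc_meas j).pow_const 4) 1 fun g => by
          rw [abs_pow]; exact pow_le_one₀ (abs_nonneg _) (abs_Xc_le_one hn1 j g)).add
          (integrable_of_bounded ((Xc_meas k).pow_const 4) 1 fun g => by
          rw [abs_pow]; exact pow_le_one₀ (abs_nonneg _) (abs_Xc_le_one hn1 k g))
      · intro g
        rw [P4]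
        nlinarith [sq_nonneg ((Xc n j g)^2 - (Xc n k g)^2), sq_nonneg (Xc n j g * Xc n k g)]
    rw [g6] at hmono
    linarith
  -- the chain
  set N : ℝ := (n:ℝ) with hN
  have hN17 : (17:ℝ) ≤ N := by rw [hN]; exact_mod_cast hn
  have hD_abs : (N - 1) * |D| = Qm := by
    have h1 : (N-1) * D = -Qm := by linarith
    have h2 : |(N-1) * D| = |(-Qm)| := by rw [h1]
    rwa [abs_mul, abs_of_nonneg (by linarith : (0:ℝ) ≤ N - 1), abs_neg,
      abs_of_nonneg hQm_nn] at h2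
  have hD_le : |D| ≤ Qm := by nlinarith [abs_nonneg D]
  have hCc_abs : (N - 2) * |Cc| ≤ 2 * Qm := by
    have h1 : (N-2) * Cc = -(D + E) := by linarith
    have h2 : |(N-2) * Cc| = |D + E| := by rw [h1, abs_neg]
    rw [abs_mul, abs_of_nonneg (by linarith : (0:ℝ) ≤ N - 2)] at h2
    have h3 : |D + E| ≤ |D| + |E| := abs_add_le D E
    have h4 : |E| = E := abs_of_nonneg hE_nn
    nlinarith
  have hA_abs : (N - 3) * |A| = 3 * |Cc| := by
    have h1 : (N-3) * A = -(3 * Cc) := by linarith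
    have h2 : |(N-3) * A| = |3 * Cc| := by rw [h1, abs_neg]
    rwa [abs_mul, abs_of_nonneg (by linarith : (0:ℝ) ≤ N - 3), abs_mul,
      abs_of_nonneg (by norm_num : (0:ℝ) ≤ 3)] at h2
  have hfin : (N - 3) * (N - 2) * |A| ≤ 6 * Qm := by
    have h1 : (N-2) * ((N-3) * |A|) = 3 * ((N-2) * |Cc|) := by
      rw [hA_abs]; ring
    nlinarith [abs_nonneg Cc]
  have hN2 : N^2 / 4 * |A| ≤ 6 * Qm := by
    have hcmp : N^2/4 ≤ (N-3)*(N-2) := by nlinarith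
    nlinarith [abs_nonneg A]
  have hQmN : Qm * N^4 ≤ 8 + 8*(262144 * 3126 * 256) := by
    have := (le_div_iff₀ (by positivity : (0:ℝ) < N^4)).mp hQm_bd
    linarith
  rw [le_div_iff₀ (by positivity : (0:ℝ) < N^6)]
  have hstep : |A| * N^6 = (N^2 * |A|) * N^4 := by ring
  rw [hstep]
  have h1 : N^2 * |A| ≤ 24 * Qm := by linarith
  calc (N^2 * |A|) * N^4 ≤ (24 * Qm) * N^4 := by
        apply mul_le_mul_of_nonneg_right h1 (by positivity)
    _ = 24 * (Qm * N^4) := by ring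
    _ ≤ 24 * (8 + 8*(262144 * 3126 * 256)) := by linarith

end SphereAux

open SphereAux in
/-- for `y` uniform on `S^{n-1}`, `n ≥ 4`, and mutually distinct `i j k l`,
`|E[(y_i² - 1/n)(y_j² - 1/n)(y_k² - 1/n)(y_l² - 1/n)]| ≤ C n^{-6}`. -/
theorem statement2 :
    ∃ C : ℝ, 0 < C ∧ ∀ (n : ℕ), 4 ≤ n → ∀ i j k l : Fin n,
      i ≠ j → i ≠ k → i ≠ l → j ≠ k → j ≠ l → k ≠ l →
      |∫ y, (y i ^ 2 - 1 / n) * (y j ^ 2 - 1 / n) * (y k ^ 2 - 1 / n) * (y l ^ 2 - 1 / n)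
          ∂(sphereUniform n)| ≤ C / (n : ℝ) ^ 6 := by
  refine ⟨24 * (8 + 8*(262144 * 3126 * 256)) + 17^6, by norm_num, ?_⟩
  intro n hn4 i j k l hij hik hil hjk hjl hkl
  have hn1 : 1 ≤ n := by omega
  have hn0 : (0:ℝ) < (n:ℝ) := by exact_mod_cast (by omega : 0 < n)
  have hmeas : Measurable (fun (g : Fin n → ℝ) (t : Fin n) => g t / Real.sqrt (∑ s, g s ^ 2)) := by
    apply measurable_pi_lambda
    intro t
    apply Measurable.div
    · exact measurable_pi_apply t
    · exact (Finset.measurable_sum _ fun r _ => (measurable_pi_apply r).pow_const 2).sqrt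
  have hFmeas : Measurable (fun y : Fin n → ℝ =>
      (y i ^ 2 - 1/(n:ℝ)) * (y j ^ 2 - 1/(n:ℝ)) * (y k ^ 2 - 1/(n:ℝ)) * (y l ^ 2 - 1/(n:ℝ))) := by
    refine Measurable.mul (Measurable.mul (Measurable.mul ?_ ?_) ?_) ?_ <;>
      exact ((measurable_pi_apply _).pow_const 2).sub_const _
  have key : (∫ y, (y i ^ 2 - 1 / (n:ℝ)) * (y j ^ 2 - 1 / (n:ℝ)) * (y k ^ 2 - 1 / (n:ℝ))
        * (y l ^ 2 - 1 / (n:ℝ)) ∂sphereUniform n)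
      = ∫ g, Xc n i g * Xc n j g * Xc n k g * Xc n l g ∂stdGaussian n := by
    rw [sphereUniform, integral_map hmeas.aemeasurable hFmeas.aestronglyMeasurable]
    rfl
  have key2 : ∫ g, Xc n i g * Xc n j g * Xc n k g * Xc n l g ∂stdGaussian n
      = EI n (Pi.single j 1 + Pi.single k 1 + Pi.single l 1 + Pi.single i 1) := by
    unfold EI
    congr 1
    funext g
    rw [P4]
    ring
  rw [key, key2]
  by_cases hncase : 17 ≤ n
  · refine (A_bound n hncase i j k l hij hik hil hjk hjl hkl).trans ?_
    gcongr
    norm_num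
  · have h1 : |EI n (Pi.single j 1 + Pi.single k 1 + Pi.single l 1 + Pi.single i 1)| ≤ 1 := by
      unfold EI
      have h := norm_integral_le_of_norm_le_const (μ := stdGaussian n) (C := 1)
        (f := P n (Pi.single j 1 + Pi.single k 1 + Pi.single l 1 + Pi.single i 1))
        (ae_of_all _ fun g => by
          rw [Real.norm_eq_abs]
          exact abs_P_le_one hn1 (Pi.single j 1 + Pi.single k 1 + Pi.single l 1 + Pi.single i 1) g)
      simpa [measure_univ] using h
    refine h1.trans ?_
    have hn16 : (n:ℝ) ≤ 17 := by exact_mod_cast (by omega : n ≤ 17)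
    rw [le_div_iff₀ (by positivity)]
    have h6 : (n:ℝ)^6 ≤ 17^6 := pow_le_pow_left₀ hn0.le hn16 6
    nlinarith
end

section
/- Let F_sc be the cumulative distribution function of the semicircle law, F_sc(s) = ∫_{-2}^{s} (1/(2π)) sqrt(4-x^2) dx for s ∈ [-2,2]. Then there exist positive constants C and C' such that for all -2 ≤ s_1 ≤ s_2 ≤ 2, setting t_j = F_sc(s_j), one has C (t_2 - t_1) ≤ s_2 - s_1 ≤ C' (t_2 - t_1)^{2/3}. -/
open Real

/-- The cumulative distribution function of the semicircle law on `[-2,2]`. -/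
noncomputable def Fsc (s : ℝ) : ℝ :=
  ∫ x in (-2 : ℝ)..s, Real.sqrt (4 - x ^ 2) / (2 * π)

lemma sc_cont : Continuous (fun x : ℝ => Real.sqrt (4 - x ^ 2) / (2 * π)) := by
  fun_prop

lemma sc_int (a b : ℝ) :
    IntervalIntegrable (fun x : ℝ => Real.sqrt (4 - x ^ 2) / (2 * π)) MeasureTheory.volume a b :=
  sc_cont.intervalIntegrable a b

lemma sc_nonneg (x : ℝ) : 0 ≤ Real.sqrt (4 - x ^ 2) / (2 * π) :=
  div_nonneg (Real.sqrt_nonneg _) (by positivity)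

lemma Fsc_diff (s₁ s₂ : ℝ) :
    Fsc s₂ - Fsc s₁ = ∫ x in s₁..s₂, Real.sqrt (4 - x ^ 2) / (2 * π) := by
  have h := intervalIntegral.integral_add_adjacent_intervals (sc_int (-2) s₁) (sc_int s₁ s₂)
  simp only [Fsc]
  linarith

/-- there are `C, C' > 0` such that for all `-2 ≤ s₁ ≤ s₂ ≤ 2`, with
`t_j = F_sc(s_j)`, one has `C (t₂ - t₁) ≤ s₂ - s₁ ≤ C' (t₂ - t₁)^{2/3}`. -/
theorem statement7 :
    ∃ C C' : ℝ, 0 < C ∧ 0 < C' ∧ ∀ s₁ s₂ : ℝ, -2 ≤ s₁ → s₁ ≤ s₂ → s₂ ≤ 2 →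
      C * (Fsc s₂ - Fsc s₁) ≤ s₂ - s₁ ∧
      s₂ - s₁ ≤ C' * (Fsc s₂ - Fsc s₁) ^ ((2 : ℝ) / 3) := by
  refine ⟨π, 12 * π, pi_pos, by positivity, fun s₁ s₂ h1 h12 h2 => ?_⟩
  have hdiff := Fsc_diff s₁ s₂
  constructor
  · -- lower bound: density ≤ 1/π
    have hle : (Fsc s₂ - Fsc s₁) ≤ (s₂ - s₁) * (1 / π) := by
      rw [hdiff]
      have : ∫ x in s₁..s₂, Real.sqrt (4 - x ^ 2) / (2 * π)
          ≤ ∫ _x in s₁..s₂, (1 / π : ℝ) := by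
        apply intervalIntegral.integral_mono_on h12 (sc_int s₁ s₂) intervalIntegrable_const
        intro x _
        have hs4 : Real.sqrt (4 - x ^ 2) ≤ 2 := by
          have h4 : Real.sqrt (4 - x ^ 2) ≤ Real.sqrt 4 := Real.sqrt_le_sqrt (by nlinarith [sq_nonneg x])
          have : Real.sqrt 4 = 2 := by
            rw [show (4 : ℝ) = 2 ^ 2 by norm_num, Real.sqrt_sq (by norm_num : (0:ℝ) ≤ 2)]
          linarith
        rw [div_le_div_iff₀ (by positivity) pi_pos]
        nlinarith [pi_pos]
      rwa [intervalIntegral.integral_const, smul_eq_mul] at this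
    have := mul_le_mul_of_nonneg_left hle pi_pos.le
    calc π * (Fsc s₂ - Fsc s₁) ≤ π * ((s₂ - s₁) * (1 / π)) := this
      _ = s₂ - s₁ := by field_simp
  · -- upper bound
    rcases eq_or_lt_of_le h12 with heq | hlt
    · subst heq
      have : Fsc s₁ - Fsc s₁ = 0 := by ring
      rw [this, Real.zero_rpow (by norm_num : (2:ℝ)/3 ≠ 0)]
      simp
    set d := s₂ - s₁ with hd
    have hdpos : 0 < d := by simp [hd]; linarith
    have hd4 : d ≤ 4 := by simp [hd]; linarith
    -- key: ∫ ≥ d^{3/2}/(12π)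
    have hkey : d * Real.sqrt d / (12 * π) ≤ Fsc s₂ - Fsc s₁ := by
      rw [hdiff]
      have hsub : ∫ x in (s₁ + d/3)..(s₂ - d/3), Real.sqrt (4 - x ^ 2) / (2 * π)
          ≤ ∫ x in s₁..s₂, Real.sqrt (4 - x ^ 2) / (2 * π) := by
        apply intervalIntegral.integral_mono_interval (by linarith) (by linarith) (by linarith)
        · filter_upwards with x using sc_nonneg x
        · exact sc_int s₁ s₂
      have hpt : ∫ _x in (s₁ + d/3)..(s₂ - d/3), (Real.sqrt d / 2 / (2 * π))
          ≤ ∫ x in (s₁ + d/3)..(s₂ - d/3), Real.sqrt (4 - x ^ 2) / (2 * π) := by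
        apply intervalIntegral.integral_mono_on (by linarith) intervalIntegrable_const
          (sc_int _ _)
        intro x hx
        have hx1 : d / 3 ≤ 2 - x := by
          have := hx.2; simp [hd] at this ⊢; linarith
        have hx2 : d / 3 ≤ 2 + x := by
          have := hx.1; simp [hd] at this ⊢; linarith
        have hq : d / 4 ≤ 4 - x ^ 2 := by
          nlinarith [mul_nonneg (by linarith : (0:ℝ) ≤ 2 - x - d/3) (by linarith : (0:ℝ) ≤ 2 + x - d/3),
            mul_nonneg hdpos.le (by linarith : (0:ℝ) ≤ 4 - d)]
        have hsq : Real.sqrt d / 2 ≤ Real.sqrt (4 - x ^ 2) := by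
          have h1 : Real.sqrt (d / 4) ≤ Real.sqrt (4 - x ^ 2) := Real.sqrt_le_sqrt hq
          have h2 : Real.sqrt (d / 4) = Real.sqrt d / 2 := by
            rw [Real.sqrt_div hdpos.le,
              show Real.sqrt 4 = 2 by
                rw [show (4:ℝ) = 2 ^ 2 by norm_num, Real.sqrt_sq (by norm_num : (0:ℝ) ≤ 2)]]
          linarith
        gcongr
      rw [intervalIntegral.integral_const, smul_eq_mul] at hpt
      have harea : (s₂ - d/3 - (s₁ + d/3)) * (Real.sqrt d / 2 / (2 * π)) = d * Real.sqrt d / (12 * π) := by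
        have : s₂ - d/3 - (s₁ + d/3) = d / 3 := by simp [hd]; ring
        rw [this]; field_simp; ring
      linarith [harea ▸ hpt]
    set t := Fsc s₂ - Fsc s₁ with ht
    have hdsq : d * Real.sqrt d ≤ 12 * π * t := by
      have h12p : (0:ℝ) < 12 * π := by positivity
      rw [div_le_iff₀ h12p] at hkey
      linarith
    have htpos : 0 ≤ t := by
      have : 0 < d * Real.sqrt d := by positivity
      nlinarith [pi_pos]
    -- d = (d * sqrt d)^{2/3}
    have hu : Real.sqrt d > 0 := Real.sqrt_pos.2 hdpos
    have hcube : d * Real.sqrt d = (Real.sqrt d) ^ (3:ℕ) :=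
      (by rw [pow_succ, Real.sq_sqrt hdpos.le] : (Real.sqrt d) ^ (3:ℕ) = d * Real.sqrt d).symm
    have hdeq : d = (d * Real.sqrt d) ^ ((2:ℝ)/3) := by
      rw [hcube, ← Real.rpow_natCast (Real.sqrt d) 3, ← Real.rpow_mul hu.le,
        show ((3:ℕ):ℝ) * ((2:ℝ)/3) = ((2:ℕ):ℝ) by norm_num,
        Real.rpow_natCast, Real.sq_sqrt hdpos.le]
    have hmono : (d * Real.sqrt d) ^ ((2:ℝ)/3) ≤ (12 * π * t) ^ ((2:ℝ)/3) :=
      Real.rpow_le_rpow (by positivity) hdsq (by norm_num)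
    have hsplit : (12 * π * t) ^ ((2:ℝ)/3) = (12 * π) ^ ((2:ℝ)/3) * t ^ ((2:ℝ)/3) :=
      Real.mul_rpow (by positivity) htpos
    have hconst : (12 * π) ^ ((2:ℝ)/3) ≤ 12 * π := by
      nth_rewrite 2 [← Real.rpow_one (12 * π)]
      apply Real.rpow_le_rpow_of_exponent_le
      · nlinarith [pi_gt_three]
      · norm_num
    calc d = (d * Real.sqrt d) ^ ((2:ℝ)/3) := hdeq
      _ ≤ (12 * π * t) ^ ((2:ℝ)/3) := hmono
      _ = (12 * π) ^ ((2:ℝ)/3) * t ^ ((2:ℝ)/3) := hsplit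
      _ ≤ 12 * π * t ^ ((2:ℝ)/3) := by
          apply mul_le_mul_of_nonneg_right hconst (Real.rpow_nonneg htpos _)
end
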